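/- With H = H₀ ⊕ H₁ ⊕ ⋯ ⊕ Hₙ, Uₖ : H → Hₖ isometries, Pₖ = Uₖ Uₖ* and P₀ the projection onto H₀, and Φ(z) = Σₖ wₖ Uₖ z Uₖ* (wₖ ≥ 0, Σ wₖ = 1), the map Ψ(z) := Σₖ Uₖ* Pₖ z Pₖ Uₖ + P₀ z P₀ is a stochastic map (positive, trace-preserving) satisfying Ψ(Φ(z)) = z for every self-adjoint trace class z; hence Φ is reversible by a stochastic map. -/

import Mathlib

open ContinuousLinearMap
open scoped ComplexInnerProductSpace

/-- The trace of an operator `T` computed along the Hilbert basis `b`: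
`tr T = Σᵢ Re ⟪T bᵢ, bᵢ⟫`. For positive trace class operators this is independent
of the choice of basis. -/
noncomputable def trC {H ι : Type*} [NormedAddCommGroup H] [InnerProductSpace ℂ H]
    (b : HilbertBasis ι ℂ H) (T : H →L[ℂ] H) : ℝ :=
  ∑' i, (⟪T (b i), b i⟫).re

/-- `x` is a positive trace class operator (with trace computed along `b`). -/
def IsTCPos {H ι : Type*} [NormedAddCommGroup H] [InnerProductSpace ℂ H] [CompleteSpace H]
    (b : HilbertBasis ι ℂ H) (x : H →L[ℂ] H) : Prop :=
  x.IsPositive ∧ Summable fun i => (⟪x (b i), b i⟫).re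

/-- `z` is a self-adjoint trace class operator: it has a Jordan decomposition
`z = p - q` into orthogonal positive operators of finite trace. -/
def IsTraceClassSA {H ι : Type*} [NormedAddCommGroup H] [InnerProductSpace ℂ H]
    [CompleteSpace H] (b : HilbertBasis ι ℂ H) (z : H →L[ℂ] H) : Prop :=
  ∃ p q : H →L[ℂ] H, IsTCPos b p ∧ IsTCPos b q ∧ z = p - q ∧ p ∘L q = 0

/-- The trace norm of a self-adjoint trace class operator `z`:
`‖z‖₁ = inf { tr p + tr q | p, q positive, z = p - q }` (the infimum is attained at
the Jordan decomposition). -/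
noncomputable def trNorm {H ι : Type*} [NormedAddCommGroup H] [InnerProductSpace ℂ H]
    [CompleteSpace H] (b : HilbertBasis ι ℂ H) (z : H →L[ℂ] H) : ℝ :=
  sInf {r : ℝ | ∃ p q : H →L[ℂ] H,
    p.IsPositive ∧ q.IsPositive ∧ z = p - q ∧ r = trC b p + trC b q}

open scoped ENNReal NNReal

set_option maxHeartbeats 2000000

lemma my_parseval {H ι : Type*} [NormedAddCommGroup H] [InnerProductSpace ℂ H]
    (b : HilbertBasis ι ℂ H) (x : H) :
    ∑' i, ((‖⟪b i, x⟫‖₊ : ℝ≥0∞))^2 = ((‖x‖₊ : ℝ≥0∞))^2 := by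
  have h := b.hasSum_inner_mul_inner x x
  have h2 : HasSum (fun i => ‖⟪b i, x⟫‖^2) (‖x‖^2) := by
    have h3 := h.mapL Complex.reCLM
    simp only [Complex.reCLM_apply] at h3
    convert h3 using 2 with i
    · rw [← inner_conj_symm x (b i), mul_comm, Complex.mul_conj']
      simp [← Complex.ofReal_pow]
    · rw [inner_self_eq_norm_sq_to_K]
      simp [← Complex.ofReal_pow]
  have hnn : ∀ i, 0 ≤ ‖⟪b i, x⟫‖^2 := fun i => sq_nonneg _
  have h4 := ENNReal.ofReal_tsum_of_nonneg hnn h2.summable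
  rw [h2.tsum_eq] at h4
  have conv : ∀ u : ℂ, ENNReal.ofReal (‖u‖^2) = ((‖u‖₊ : ℝ≥0∞))^2 := fun u => by
    rw [ENNReal.ofReal_pow (norm_nonneg u), ofReal_norm, enorm_eq_nnnorm]
  have convH : ∀ u : H, ENNReal.ofReal (‖u‖^2) = ((‖u‖₊ : ℝ≥0∞))^2 := fun u => by
    rw [ENNReal.ofReal_pow (norm_nonneg u), ofReal_norm, enorm_eq_nnnorm]
  calc ∑' i, ((‖⟪b i, x⟫‖₊ : ℝ≥0∞))^2 = ∑' i, ENNReal.ofReal (‖⟪b i, x⟫‖^2) := by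
        simp_rw [conv]
    _ = ENNReal.ofReal (‖x‖^2) := h4.symm
    _ = _ := convH x

lemma my_hs {H ι : Type*} [NormedAddCommGroup H] [InnerProductSpace ℂ H] [CompleteSpace H]
    (b : HilbertBasis ι ℂ H) (T : H →L[ℂ] H) :
    ∑' i, ((‖T (b i)‖₊ : ℝ≥0∞))^2 = ∑' j, ((‖(adjoint T) (b j)‖₊ : ℝ≥0∞))^2 := by
  have h1 : ∀ i, ((‖T (b i)‖₊ : ℝ≥0∞))^2 = ∑' j, ((‖⟪b j, T (b i)⟫‖₊ : ℝ≥0∞))^2 :=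
    fun i => (my_parseval b _).symm
  have h2 : ∀ j, ((‖(adjoint T) (b j)‖₊ : ℝ≥0∞))^2
      = ∑' i, ((‖⟪b i, (adjoint T) (b j)⟫‖₊ : ℝ≥0∞))^2 :=
    fun j => (my_parseval b _).symm
  have key : ∀ i j, ((‖⟪b i, (adjoint T) (b j)⟫‖₊ : ℝ≥0∞))^2 = ((‖⟪b j, T (b i)⟫‖₊ : ℝ≥0∞))^2 := by
    intro i j
    have : ⟪b i, (adjoint T) (b j)⟫ = (starRingEnd ℂ) ⟪b j, T (b i)⟫ := by
      rw [adjoint_inner_right, ← inner_conj_symm]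
    rw [this, RCLike.nnnorm_conj]
  simp_rw [h1, h2, key]
  exact (ENNReal.tsum_comm).symm

/-- With `H = H₀ ⊕ H₁ ⊕ ⋯ ⊕ Hₙ`, `Uₖ : H → Hₖ` isometries,
`Pₖ = Uₖ Uₖ*` and `P₀` the orthogonal projection onto `H₀`, and
`Φ(z) = Σₖ wₖ Uₖ z Uₖ*` (`wₖ ≥ 0`, `Σ wₖ = 1`), the map
`Ψ(z) := Σₖ Uₖ* Pₖ z Pₖ Uₖ + P₀ z P₀` is a stochastic map (positive and
trace-preserving) with `Ψ(Φ(z)) = z` for every self-adjoint trace class `z`;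
hence `Φ` is reversible by a stochastic map. -/
theorem reversal_of_sum_of_isometric_conjugations
    {H ι : Type*} [NormedAddCommGroup H] [InnerProductSpace ℂ H] [CompleteSpace H]
    (b : HilbertBasis ι ℂ H)
    (n : ℕ) (hn : 2 ≤ n)
    (H0 : Submodule ℂ H) [CompleteSpace H0] (Hk : Fin n → Submodule ℂ H)
    (horth : ∀ i j, i ≠ j → ∀ x ∈ Hk i, ∀ y ∈ Hk j, ⟪x, y⟫ = 0)
    (horth0 : ∀ i, ∀ x ∈ H0, ∀ y ∈ Hk i, ⟪x, y⟫ = 0)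
    (hspan : H0 ⊔ (⨆ i, Hk i) = ⊤)
    (U : Fin n → (H →L[ℂ] H))
    (hU : ∀ k, adjoint (U k) ∘L U k = 1)
    (hUrange : ∀ k, LinearMap.range (U k : H →ₗ[ℂ] H) = Hk k)
    (w : Fin n → ℝ) (hw : ∀ k, 0 ≤ w k) (hw1 : ∑ k, w k = 1)
    -- `P₀` is the orthogonal projection onto `H₀`, `Pₖ = Uₖ Uₖ*` that onto `Hₖ`
    (P0 : H →L[ℂ] H) (hP0 : P0 = H0.subtypeL ∘L H0.orthogonalProjectionOnto)
    (P : Fin n → (H →L[ℂ] H)) (hP : ∀ k, P k = U k ∘L adjoint (U k)) :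
    (∀ z : H →L[ℂ] H, z.IsPositive →
      ((∑ k, adjoint (U k) ∘L (P k ∘L z ∘L P k) ∘L U k) + P0 ∘L z ∘L P0).IsPositive) ∧
    (∀ z : H →L[ℂ] H, IsTraceClassSA b z →
      trC b ((∑ k, adjoint (U k) ∘L (P k ∘L z ∘L P k) ∘L U k) + P0 ∘L z ∘L P0)
        = trC b z) ∧
    (∀ z : H →L[ℂ] H, IsTraceClassSA b z →
      (∑ k, adjoint (U k) ∘L
          (P k ∘L (∑ l, w l • (U l ∘L z ∘L adjoint (U l))) ∘L P k) ∘L U k)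
        + P0 ∘L (∑ l, w l • (U l ∘L z ∘L adjoint (U l))) ∘L P0 = z) := by
  -- basic cancellation facts
  have hUmul : ∀ k, adjoint (U k) * U k = 1 := fun k => hU k
  have hUcancel : ∀ k (a : H →L[ℂ] H), adjoint (U k) * (U k * a) = a := fun k a => by
    rw [← mul_assoc, hUmul, one_mul]
  -- operator simplification: Uk† (Pk x Pk) Uk = Uk† x Uk
  have hop : ∀ k (x : H →L[ℂ] H),
      adjoint (U k) ∘L (P k ∘L x ∘L P k) ∘L U k = adjoint (U k) ∘L x ∘L U k := by
    intro k x
    simp only [hP, ← mul_def]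
    simp only [mul_assoc, hUcancel, hUmul, mul_one]
  -- adjoint of U k kills vectors orthogonal to Hk k
  have hadj_zero : ∀ k (x : H), (∀ y : H, ⟪x, U k y⟫ = 0) → adjoint (U k) x = 0 := by
    intro k x h
    rw [← inner_self_eq_zero (𝕜 := ℂ), adjoint_inner_left]
    exact h _
  have hmemHk : ∀ k (y : H), U k y ∈ Hk k := by
    intro k y; rw [← hUrange k]; exact ⟨y, rfl⟩
  have hUadjH0 : ∀ k, ∀ x ∈ H0, adjoint (U k) x = 0 := fun k x hx =>
    hadj_zero k x fun y => horth0 k x hx (U k y) (hmemHk k y)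
  have hUadjHl : ∀ k l, k ≠ l → ∀ v : H, adjoint (U k) (U l v) = 0 := fun k l hkl v =>
    hadj_zero k _ fun y => horth l k (fun h => hkl h.symm) (U l v) (hmemHk l v) (U k y) (hmemHk k y)
  -- P0 facts
  have hP0sa : IsSelfAdjoint P0 := hP0 ▸ (isSelfAdjoint_starProjection H0 : IsSelfAdjoint (H0.subtypeL ∘L H0.orthogonalProjectionOnto))
  have hP0adj : adjoint P0 = P0 := by rw [← star_eq_adjoint]; exact hP0sa
  have hP0symm : ∀ u v : H, (⟪P0 u, v⟫) = ⟪u, P0 v⟫ := fun u v =>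
    (isSelfAdjoint_iff_isSymmetric.mp hP0sa) u v
  have hP0self : ∀ x ∈ H0, P0 x = x := by
    intro x hx; rw [hP0]; exact Submodule.starProjection_eq_self_iff.mpr hx
  have hP0perp : ∀ x : H, (∀ u ∈ H0, ⟪u, x⟫ = 0) → P0 x = 0 := by
    intro x hx
    rw [hP0]
    simp only [comp_apply]
    rw [Submodule.orthogonalProjectionOnto_apply_of_mem_orthogonal
      (Submodule.mem_orthogonal H0 x |>.mpr hx)]
    rfl
  have hP0U : ∀ l (v : H), P0 (U l v) = 0 := fun l v =>
    hP0perp _ fun u hu => horth0 l u hu (U l v) (hmemHk l v)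
  have hP0Uop : ∀ l, P0 ∘L U l = 0 := by
    intro l; ext v; simp [comp_apply, hP0U l v]
  have hUU0 : ∀ k l, k ≠ l → adjoint (U k) ∘L U l = 0 := by
    intro k l hkl; ext v; simp [comp_apply, hUadjHl k l hkl v]
  -- resolution of identity
  have hQ : (∑ k, P k) + P0 = 1 := by
    ext v
    have hv : v ∈ H0 ⊔ ⨆ i, Hk i := by rw [hspan]; exact Submodule.mem_top
    obtain ⟨a, ha, c, hc, rfl⟩ := Submodule.mem_sup.mp hv
    have hQa : ((∑ k, P k) + P0) a = a := by
      simp only [add_apply, sum_apply, hP, comp_apply]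
      rw [Finset.sum_eq_zero (fun k _ => by rw [hUadjH0 k a ha, map_zero]), hP0self a ha, zero_add]
    have hQc : ((∑ k, P k) + P0) c = c := by
      refine Submodule.iSup_induction (motive := fun x => ((∑ k, P k) + P0) x = x) Hk hc
        (fun i x hx => ?_) (by simp) (fun x y hx hy => by
          show ((∑ k, P k) + P0) (x + y) = x + y
          rw [map_add, hx, hy])
      obtain ⟨y, rfl⟩ : ∃ y, U i y = x := by
        have h' := hx; rw [← hUrange i] at h'; exact h'
      simp only [add_apply, sum_apply, hP, comp_apply]
      rw [hP0U i y, add_zero]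
      rw [Finset.sum_eq_single i]
      · have hy' : adjoint (U i) (U i y) = y := by
          have := congrArg (fun (T : H →L[ℂ] H) => T y) (hU i); simpa using this
        rw [hy']
      · intro j _ hji
        rw [hUadjHl j i hji y, map_zero]
      · intro hi; exact absurd (Finset.mem_univ i) hi
    rw [map_add, hQa, hQc]
    simp
  -- pointwise Pythagoras (real)
  have hQre : ∀ v : H, (∑ k, ‖adjoint (U k) v‖^2) + ‖P0 v‖^2 = ‖v‖^2 := by
    intro v
    have h1 := congrArg (fun (T : H →L[ℂ] H) => (⟪T v, v⟫).re) hQ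
    simp only [add_apply, sum_apply, one_apply] at h1
    rw [inner_add_left, sum_inner, Complex.add_re, Complex.re_sum] at h1
    have h2 : ∀ k, (⟪P k v, v⟫).re = ‖adjoint (U k) v‖^2 := by
      intro k
      rw [hP, comp_apply, ← adjoint_inner_right, inner_self_eq_norm_sq_to_K]
      simp [← Complex.ofReal_pow]
    have h3 : (⟪P0 v, v⟫).re = ‖P0 v‖^2 := by
      have hmem : P0 v ∈ H0 := by
        rw [hP0]; simp only [comp_apply]; exact Submodule.coe_mem _
      have idem : P0 (P0 v) = P0 v := hP0self _ hmem
      have heq : (⟪P0 v, v⟫) = ⟪P0 v, P0 v⟫ := by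
        calc (⟪P0 v, v⟫) = ⟪P0 (P0 v), v⟫ := by rw [idem]
          _ = ⟪P0 v, adjoint P0 v⟫ := (adjoint_inner_right P0 (P0 v) v).symm
          _ = ⟪P0 v, P0 v⟫ := by rw [hP0adj]
      rw [heq, inner_self_eq_norm_sq_to_K]
      simp [← Complex.ofReal_pow]
    have h4 : (⟪v, v⟫).re = ‖v‖^2 := by
      rw [inner_self_eq_norm_sq_to_K]; simp [← Complex.ofReal_pow]
    change _ = (⟪v, v⟫).re at h1; rw [h4] at h1
    rw [← h1]
    congr 1
    · exact Finset.sum_congr rfl fun k _ => (h2 k).symm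
    · exact h3.symm

  -- ENNReal conversions
  have convH : ∀ u : H, ENNReal.ofReal (‖u‖^2) = ((‖u‖₊ : ℝ≥0∞))^2 := fun u => by
    rw [ENNReal.ofReal_pow (norm_nonneg u), ofReal_norm, enorm_eq_nnnorm]
  have hQe : ∀ v : H, (∑ k, ((‖adjoint (U k) v‖₊ : ℝ≥0∞))^2) + ((‖P0 v‖₊ : ℝ≥0∞))^2
      = ((‖v‖₊ : ℝ≥0∞))^2 := by
    intro v
    rw [← convH v, ← hQre v]
    rw [ENNReal.ofReal_add (by positivity) (by positivity),
      ENNReal.ofReal_sum_of_nonneg (fun k _ => by positivity)]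
    simp_rw [convH]
  -- Part 1 : positivity
  have pos : ∀ z : H →L[ℂ] H, z.IsPositive →
      ((∑ k, adjoint (U k) ∘L (P k ∘L z ∘L P k) ∘L U k) + P0 ∘L z ∘L P0).IsPositive := by
    intro z hz
    have h1 : (∑ k, adjoint (U k) ∘L (P k ∘L z ∘L P k) ∘L U k).IsPositive := by
      classical
      have hterm : ∀ k, (adjoint (U k) ∘L (P k ∘L z ∘L P k) ∘L U k).IsPositive := by
        intro k
        rw [hop k z]
        exact hz.adjoint_conj (U k)
      induction (Finset.univ : Finset (Fin n)) using Finset.induction_on with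
      | empty => simpa using isPositive_zero
      | insert _ _ h ih => rw [Finset.sum_insert h]; exact (hterm _).add ih
    have h2 : (P0 ∘L z ∘L P0).IsPositive := by
      have := hz.adjoint_conj P0
      rwa [hP0adj] at this
    exact h1.add h2
  -- ENNReal trace identity for positive operators
  have mainE : ∀ x : H →L[ℂ] H, x.IsPositive →
      ∑' i, ENNReal.ofReal
        ((⟪((∑ k, adjoint (U k) ∘L (P k ∘L x ∘L P k) ∘L U k) + P0 ∘L x ∘L P0) (b i), b i⟫).re)
        = ∑' i, ENNReal.ofReal ((⟪x (b i), b i⟫).re) := by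
    intro x hx
    obtain ⟨S, hSpos, hSS⟩ : ∃ S : H →L[ℂ] H, S.IsPositive ∧ S ∘L S = x := by
      refine ⟨CFC.sqrt x, ?_, ?_⟩
      · rw [← nonneg_iff_isPositive]; exact CFC.sqrt_nonneg x
      · rw [← mul_def]; exact CFC.sqrt_mul_sqrt_self x ((nonneg_iff_isPositive x).mpr hx)
    have hSadj : adjoint S = S := by rw [← star_eq_adjoint]; exact hSpos.isSelfAdjoint
    have hre : ∀ v : H, (⟪x v, v⟫).re = ‖S v‖^2 := by
      intro v
      have heq : (⟪x v, v⟫) = ⟪S v, S v⟫ := by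
        rw [← hSS]
        calc (⟪(S ∘L S) v, v⟫) = ⟪S (S v), v⟫ := rfl
          _ = ⟪S v, adjoint S v⟫ := (adjoint_inner_right S (S v) v).symm
          _ = ⟪S v, S v⟫ := by rw [hSadj]
      rw [heq, inner_self_eq_norm_sq_to_K]
      simp [← Complex.ofReal_pow]
    have hterm : ∀ (k) (i : ι), (⟪(adjoint (U k) ∘L (P k ∘L x ∘L P k) ∘L U k) (b i), b i⟫).re
        = ‖(S ∘L U k) (b i)‖^2 := by
      intro k i
      rw [hop k x]
      simp only [comp_apply]
      rw [adjoint_inner_left]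
      exact hre (U k (b i))
    have hterm0 : ∀ i : ι, (⟪(P0 ∘L x ∘L P0) (b i), b i⟫).re = ‖(S ∘L P0) (b i)‖^2 := by
      intro i
      simp only [comp_apply]
      rw [hP0symm]
      exact hre (P0 (b i))
    have hsplit : ∀ i : ι,
        (⟪((∑ k, adjoint (U k) ∘L (P k ∘L x ∘L P k) ∘L U k) + P0 ∘L x ∘L P0) (b i), b i⟫).re
        = (∑ k, ‖(S ∘L U k) (b i)‖^2) + ‖(S ∘L P0) (b i)‖^2 := by
      intro i
      rw [add_apply, sum_apply, inner_add_left, sum_inner, Complex.add_re, Complex.re_sum]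
      rw [hterm0 i]
      congr 1
      exact Finset.sum_congr rfl fun k _ => hterm k i
    calc ∑' i, ENNReal.ofReal
          ((⟪((∑ k, adjoint (U k) ∘L (P k ∘L x ∘L P k) ∘L U k) + P0 ∘L x ∘L P0) (b i), b i⟫).re)
        = ∑' i, ((∑ k, ((‖(S ∘L U k) (b i)‖₊ : ℝ≥0∞))^2) + ((‖(S ∘L P0) (b i)‖₊ : ℝ≥0∞))^2) := by
          refine tsum_congr fun i => ?_
          rw [hsplit i, ENNReal.ofReal_add (by positivity) (by positivity),
            ENNReal.ofReal_sum_of_nonneg (fun k _ => by positivity)]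
          simp_rw [convH]
      _ = (∑ k, ∑' i, ((‖(S ∘L U k) (b i)‖₊ : ℝ≥0∞))^2)
            + ∑' i, ((‖(S ∘L P0) (b i)‖₊ : ℝ≥0∞))^2 := by
          rw [ENNReal.tsum_add]
          congr 1
          exact Summable.tsum_finsetSum fun k _ => ENNReal.summable
      _ = (∑ k, ∑' j, ((‖adjoint (U k) (S (b j))‖₊ : ℝ≥0∞))^2)
            + ∑' j, ((‖P0 (S (b j))‖₊ : ℝ≥0∞))^2 := by
          congr 1
          · refine Finset.sum_congr rfl fun k _ => ?_
            rw [my_hs b (S ∘L U k)]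
            refine tsum_congr fun j => ?_
            rw [adjoint_comp, hSadj]
            rfl
          · rw [my_hs b (S ∘L P0)]
            refine tsum_congr fun j => ?_
            rw [adjoint_comp, hSadj, hP0adj]
            rfl
      _ = ∑' j, ((∑ k, ((‖adjoint (U k) (S (b j))‖₊ : ℝ≥0∞))^2)
            + ((‖P0 (S (b j))‖₊ : ℝ≥0∞))^2) := by
          rw [ENNReal.tsum_add]
          congr 1
          exact (Summable.tsum_finsetSum fun k _ => ENNReal.summable).symm
      _ = ∑' j, ((‖S (b j)‖₊ : ℝ≥0∞))^2 := tsum_congr fun j => hQe (S (b j))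
      _ = ∑' j, ENNReal.ofReal ((⟪x (b j), b j⟫).re) := by
          refine tsum_congr fun j => ?_
          rw [hre (b j), convH]
  -- nonnegativity of diagonal entries of positive operators
  have repos : ∀ (T : H →L[ℂ] H), T.IsPositive → ∀ v, 0 ≤ (⟪T v, v⟫).re := by
    intro T hT v
    have := hT.inner_nonneg_left v
    simpa using (Complex.le_def.mp this).1
  -- trace preservation for positive trace-class operators
  have main2 : ∀ x : H →L[ℂ] H, IsTCPos b x →
      Summable (fun i =>
        (⟪((∑ k, adjoint (U k) ∘L (P k ∘L x ∘L P k) ∘L U k) + P0 ∘L x ∘L P0) (b i), b i⟫).re)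
      ∧ trC b ((∑ k, adjoint (U k) ∘L (P k ∘L x ∘L P k) ∘L U k) + P0 ∘L x ∘L P0) = trC b x := by
    intro x hx
    obtain ⟨hxpos, hxsum⟩ := hx
    set Ψ := (∑ k, adjoint (U k) ∘L (P k ∘L x ∘L P k) ∘L U k) + P0 ∘L x ∘L P0 with hΨdef
    have hfnn : ∀ i, 0 ≤ (⟪Ψ (b i), b i⟫).re := fun i => repos Ψ (pos x hxpos) (b i)
    have hgnn : ∀ i, 0 ≤ (⟪x (b i), b i⟫).re := fun i => repos x hxpos (b i)
    have hE := mainE x hxpos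
    have hgE : ∑' i, ENNReal.ofReal ((⟪x (b i), b i⟫).re) = ENNReal.ofReal (trC b x) :=
      (ENNReal.ofReal_tsum_of_nonneg hgnn hxsum).symm
    have hfin : ∑' i, ENNReal.ofReal ((⟪Ψ (b i), b i⟫).re) ≠ ⊤ := by
      rw [hE, hgE]; exact ENNReal.ofReal_ne_top
    have hfsum : Summable fun i => (⟪Ψ (b i), b i⟫).re := by
      have h := ENNReal.summable_toReal hfin
      have heqf : (fun i => (ENNReal.ofReal ((⟪Ψ (b i), b i⟫).re)).toReal)
          = fun i => (⟪Ψ (b i), b i⟫).re := funext fun i => ENNReal.toReal_ofReal (hfnn i)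
      rwa [heqf] at h
    refine ⟨hfsum, ?_⟩
    have h1 : ENNReal.ofReal (trC b Ψ) = ENNReal.ofReal (trC b x) := by
      rw [show trC b Ψ = ∑' i, (⟪Ψ (b i), b i⟫).re from rfl]
      rw [ENNReal.ofReal_tsum_of_nonneg hfnn hfsum, hE, hgE]
    exact (ENNReal.ofReal_eq_ofReal_iff (tsum_nonneg hfnn) (tsum_nonneg hgnn)).mp h1
  refine ⟨pos, ?_, ?_⟩
  · -- Part 2 : trace preservation
    intro z hz
    obtain ⟨p, q, hp, hq, rfl, -⟩ := hz
    have hΨsub : (∑ k, adjoint (U k) ∘L (P k ∘L (p - q) ∘L P k) ∘L U k) + P0 ∘L (p - q) ∘L P0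
        = ((∑ k, adjoint (U k) ∘L (P k ∘L p ∘L P k) ∘L U k) + P0 ∘L p ∘L P0)
          - ((∑ k, adjoint (U k) ∘L (P k ∘L q ∘L P k) ∘L U k) + P0 ∘L q ∘L P0) := by
      simp only [← mul_def, mul_sub, sub_mul, Finset.sum_sub_distrib]
      abel
    rw [hΨsub]
    obtain ⟨hpsum, hptr⟩ := main2 p hp
    obtain ⟨hqsum, hqtr⟩ := main2 q hq
    set Ψp := (∑ k, adjoint (U k) ∘L (P k ∘L p ∘L P k) ∘L U k) + P0 ∘L p ∘L P0 with hΨp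
    set Ψq := (∑ k, adjoint (U k) ∘L (P k ∘L q ∘L P k) ∘L U k) + P0 ∘L q ∘L P0 with hΨq
    have hL : trC b (Ψp - Ψq) = trC b Ψp - trC b Ψq := by
      rw [show trC b (Ψp - Ψq) = ∑' i, (⟪(Ψp - Ψq) (b i), b i⟫).re from rfl]
      have : ∀ i : ι, (⟪(Ψp - Ψq) (b i), b i⟫).re
          = (⟪Ψp (b i), b i⟫).re - (⟪Ψq (b i), b i⟫).re := by
        intro i
        rw [sub_apply, inner_sub_left, Complex.sub_re]
      simp_rw [this]
      exact Summable.tsum_sub hpsum hqsum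
    have hR : trC b (p - q) = trC b p - trC b q := by
      rw [show trC b (p - q) = ∑' i, (⟪(p - q) (b i), b i⟫).re from rfl]
      have : ∀ i : ι, (⟪(p - q) (b i), b i⟫).re
          = (⟪p (b i), b i⟫).re - (⟪q (b i), b i⟫).re := by
        intro i
        rw [sub_apply, inner_sub_left, Complex.sub_re]
      simp_rw [this]
      exact Summable.tsum_sub hp.2 hq.2
    rw [hL, hR, hptr, hqtr]
  · -- Part 3 : reversal
    intro z _
    have hP0cancel : ∀ (l) (a : H →L[ℂ] H), P0 * (U l * a) = 0 := by
      intro l a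
      have h0 : P0 * U l = 0 := by rw [mul_def]; exact hP0Uop l
      rw [← mul_assoc, h0, zero_mul]
    have hΦk : ∀ k, adjoint (U k) ∘L
        (P k ∘L (∑ l, w l • (U l ∘L z ∘L adjoint (U l))) ∘L P k) ∘L U k = w k • z := by
      intro k
      rw [hop k _]
      simp only [← mul_def]
      rw [Finset.sum_mul, Finset.mul_sum]
      rw [Finset.sum_eq_single k]
      · simp only [mul_smul_comm, smul_mul_assoc]
        congr 1
        simp only [mul_assoc, hUcancel, hUmul, mul_one]
      · intro l _ hlk
        have h0 : adjoint (U k) * U l = 0 := by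
          rw [mul_def]; exact hUU0 k l (fun h => hlk h.symm)
        simp only [mul_smul_comm, smul_mul_assoc, mul_assoc]
        rw [← mul_assoc, h0, zero_mul, smul_zero]
      · intro hk; exact absurd (Finset.mem_univ k) hk
    have hΦ0 : P0 ∘L (∑ l, w l • (U l ∘L z ∘L adjoint (U l))) ∘L P0 = 0 := by
      simp only [← mul_def]
      rw [Finset.sum_mul, Finset.mul_sum]
      refine Finset.sum_eq_zero fun l _ => ?_
      simp only [mul_smul_comm, smul_mul_assoc, mul_assoc, hP0cancel, smul_zero]
    rw [hΦ0, add_zero, Finset.sum_congr rfl fun k _ => hΦk k]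
    rw [← Finset.sum_smul, hw1, one_smul]
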